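/- Let λ be a strict partition and k ≥ 1. For a strict partition ν contained in λ, the skew diagram λ∖ν is a removable single k-ribbon of λ if and only if the set of parts of ν is obtained from the set of parts of λ either (a) by replacing one part p > k by p − k, where p − k is not a part of λ, or (b) by deleting one part equal to k. In case (a) the head of the ribbon has diagonal value p, and in case (b) it has diagonal value k. Consequently, for m ≥ 0, λ admits a removable single k-ribbon whose head has diagonal value m + k if and only if m + k is a part of λ and m is not a part of λ, and in that case the ribbon (equivalently ν) is unique. -/

import Mathlib

def IsStrictPartition (s : Finset ℕ) : Prop := ∀ x ∈ s, 0 < x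

/-- The `i`-th largest part of `s` (1-indexed); `0` if out of range. -/
def nthPart (s : Finset ℕ) (i : ℕ) : ℕ := (s.sort (· ≤ ·)).reverse.getD (i - 1) 0

/-- The shifted diagram: row `i` (1-indexed) has cells `(i, j)` with `i ≤ j ≤ i + λᵢ - 1`. -/
def shiftedDiagram (s : Finset ℕ) : Set (ℕ × ℕ) :=
  {c | 1 ≤ c.1 ∧ c.1 ≤ c.2 ∧ c.2 + 1 ≤ c.1 + nthPart s c.1}

def skewDiag (lam nu : Finset ℕ) : Set (ℕ × ℕ) := shiftedDiagram lam \ shiftedDiagram nu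

/-- Diagonal value `j - i + 1` of a cell `(i, j)`. -/
def diagVal (c : ℕ × ℕ) : ℕ := c.2 + 1 - c.1

def CellAdj (c d : ℕ × ℕ) : Prop :=
  (c.1 = d.1 ∧ (c.2 + 1 = d.2 ∨ d.2 + 1 = c.2)) ∨
  (c.2 = d.2 ∧ (c.1 + 1 = d.1 ∨ d.1 + 1 = c.1))

def EdgeConnected (S : Set (ℕ × ℕ)) : Prop :=
  ∀ c ∈ S, ∀ d ∈ S, Relation.ReflTransGen (fun x y => CellAdj x y ∧ x ∈ S ∧ y ∈ S) c d

def IsHead (S : Set (ℕ × ℕ)) (c : ℕ × ℕ) : Prop :=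
  c ∈ S ∧ ∀ d ∈ S, diagVal d ≤ diagVal c

def IsTail (S : Set (ℕ × ℕ)) (c : ℕ × ℕ) : Prop :=
  c ∈ S ∧ ∀ d ∈ S, diagVal c ≤ diagVal d

def IsRemovableSingleRibbon (lam nu : Finset ℕ) (k : ℕ) : Prop :=
  IsStrictPartition lam ∧ IsStrictPartition nu ∧
  shiftedDiagram nu ⊆ shiftedDiagram lam ∧
  (skewDiag lam nu).ncard = k ∧
  EdgeConnected (skewDiag lam nu) ∧
  Set.InjOn diagVal (skewDiag lam nu)

def IsDoubleDecomp (lam nu : Finset ℕ) (R S : Set (ℕ × ℕ)) : Prop :=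
  IsStrictPartition lam ∧ IsStrictPartition nu ∧
  shiftedDiagram nu ⊆ shiftedDiagram lam ∧
  Disjoint R S ∧ R ∪ S = skewDiag lam nu ∧
  R.Nonempty ∧ EdgeConnected R ∧ Set.InjOn diagVal R ∧
  S.Nonempty ∧ EdgeConnected S ∧ Set.InjOn diagVal S ∧
  S.ncard ≤ R.ncard ∧
  (∃ a, IsTail R (a, a)) ∧ (∃ b, IsTail S (b, b)) ∧
  (∃ mu : Finset ℕ, IsStrictPartition mu ∧ shiftedDiagram mu = shiftedDiagram lam \ R)

def IsRemovableDoubleRibbon (lam nu : Finset ℕ) (k : ℕ) : Prop :=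
  (skewDiag lam nu).ncard = k ∧ ∃ R S, IsDoubleDecomp lam nu R S

def IsRemovableRibbon (lam nu : Finset ℕ) (k : ℕ) : Prop :=
  IsRemovableSingleRibbon lam nu k ∨ IsRemovableDoubleRibbon lam nu k

/-- Characterization of removable single `k`-ribbons of a strict partition
`λ` in terms of parts, the diagonal values of their heads, and existence/uniqueness of the
ribbon with head of diagonal value `m + k`. -/
def cnt (s : Finset ℕ) (d : ℕ) : ℕ := (s.filter (fun x => d ≤ x)).card

lemma getD_sorted_iff {l : List ℕ} (hl : l.Pairwise (· ≥ ·)) {d : ℕ} (hd : 1 ≤ d) (n : ℕ) :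
    d ≤ l.getD n 0 ↔ n < (l.filter (fun x => d ≤ x)).length := by
  induction l generalizing n with
  | nil => simp [List.getD]; omega
  | cons a l ih =>
    have hal : ∀ x ∈ l, x ≤ a := fun x hx => (List.pairwise_cons.mp hl).1 x hx
    have hl' : l.Pairwise (· ≥ ·) := (List.pairwise_cons.mp hl).2
    cases n with
    | zero =>
      simp only [List.getD_cons_zero]
      by_cases h : d ≤ a
      · simp [List.filter_cons, h]
      · have : l.filter (fun x => d ≤ x) = [] := by
          apply List.filter_eq_nil_iff.mpr
          intro x hx
          simp only [decide_eq_true_eq]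
          exact fun hdx => h (le_trans hdx (hal x hx))
        simp [List.filter_cons, h, this]
    | succ n =>
      simp only [List.getD_cons_succ]
      by_cases h : d ≤ a
      · rw [ih hl']
        simp [List.filter_cons, h]
      · have : l.filter (fun x => d ≤ x) = [] := by
          apply List.filter_eq_nil_iff.mpr
          intro x hx
          simp only [decide_eq_true_eq]
          exact fun hdx => h (le_trans hdx (hal x hx))
        have h2 : ¬ d ≤ l.getD n 0 := by
          rcases lt_or_ge n l.length with hn | hn
          · rw [List.getD_eq_getElem _ _ hn]
            exact fun hdx => h (le_trans hdx (hal _ (l.getElem_mem hn)))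
          · rw [List.getD_eq_default _ _ hn]; omega
        have h3 : (List.filter (fun x => decide (d ≤ x)) (a :: l)).length = 0 := by
          simp [List.filter_cons, h, this]
        rw [h3]
        constructor
        · intro hx; exact absurd hx h2
        · intro hx; omega

lemma sort_filter_length (s : Finset ℕ) (d : ℕ) :
    ((s.sort (· ≤ ·)).filter (fun x => d ≤ x)).length = cnt s d := by
  have h1 : ((s.sort (· ≤ ·)).filter (fun x => d ≤ x)).Perm
      (s.toList.filter (fun x => d ≤ x)) :=
    (Finset.sort_perm_toList s _).filter _
  rw [h1.length_eq, cnt]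
  rw [← Multiset.coe_card, ← Multiset.filter_coe, Finset.toList, Multiset.coe_toList]
  rfl

lemma nthPart_ge_iff (s : Finset ℕ) {i d : ℕ} (hi : 1 ≤ i) (hd : 1 ≤ d) :
    d ≤ nthPart s i ↔ i ≤ cnt s d := by
  have hs : ((s.sort (· ≤ ·)).reverse).Pairwise (· ≥ ·) :=
    List.pairwise_reverse.mpr (Finset.pairwise_sort s (· ≤ ·))
  rw [nthPart, getD_sorted_iff hs hd, List.filter_reverse, List.length_reverse,
    sort_filter_length]
  omega

lemma mem_shiftedDiagram {s : Finset ℕ} {i j : ℕ} :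
    (i, j) ∈ shiftedDiagram s ↔ 1 ≤ i ∧ i ≤ j ∧ i ≤ cnt s (j + 1 - i) := by
  show 1 ≤ i ∧ i ≤ j ∧ j + 1 ≤ i + nthPart s i ↔ _
  constructor
  · rintro ⟨h1, h2, h3⟩
    refine ⟨h1, h2, ?_⟩
    rw [← nthPart_ge_iff s h1 (by omega : (1:ℕ) ≤ j + 1 - i)]
    omega
  · rintro ⟨h1, h2, h3⟩
    refine ⟨h1, h2, ?_⟩
    have := (nthPart_ge_iff s h1 (by omega : (1:ℕ) ≤ j + 1 - i)).mpr h3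
    omega

lemma cnt_anti (s : Finset ℕ) {d e : ℕ} (h : d ≤ e) : cnt s e ≤ cnt s d := by
  apply Finset.card_le_card
  intro x hx
  rw [Finset.mem_filter] at hx ⊢
  exact ⟨hx.1, le_trans h hx.2⟩

lemma cnt_succ (s : Finset ℕ) (d : ℕ) :
    cnt s d = cnt s (d + 1) + (if d ∈ s then 1 else 0) := by
  have h1 : s.filter (fun x => d ≤ x) =
      s.filter (fun x => d + 1 ≤ x ∨ x = d) := by
    apply Finset.filter_congr; intro x _; constructor <;> (intro h; omega)
  have h2 : (s.filter (fun x => x = d)).card = if d ∈ s then 1 else 0 := by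
    rw [Finset.filter_eq']
    split_ifs <;> first | simp | rfl
  have h3 : Disjoint (s.filter (fun x => d + 1 ≤ x)) (s.filter (fun x => x = d)) := by
    rw [Finset.disjoint_left]
    intro x hx1 hx2
    rw [Finset.mem_filter] at hx1 hx2
    omega
  rw [cnt, h1, Finset.filter_or, Finset.card_union_of_disjoint h3, h2, cnt]

lemma cnt_pos_of_mem {s : Finset ℕ} {x d : ℕ} (hx : x ∈ s) (hd : d ≤ x) :
    1 ≤ cnt s d := by
  rw [cnt, Nat.one_le_iff_ne_zero, Ne, Finset.card_eq_zero]
  intro h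
  have : x ∈ s.filter (fun y => d ≤ y) := Finset.mem_filter.mpr ⟨hx, hd⟩
  rw [h] at this; exact absurd this (Finset.notMem_empty x)

lemma mem_iff_cnt {s : Finset ℕ} {d : ℕ} : d ∈ s ↔ cnt s (d + 1) < cnt s d := by
  rw [cnt_succ s d]; split_ifs with h <;> simp [h]

lemma cnt_ext {s t : Finset ℕ} (h : ∀ d, cnt s d = cnt t d) : s = t := by
  ext d; rw [mem_iff_cnt, mem_iff_cnt, h, h]

lemma cnt_ext' {s t : Finset ℕ} (hs : 0 ∉ s) (ht : 0 ∉ t)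
    (h : ∀ d, 1 ≤ d → cnt s d = cnt t d) : s = t := by
  apply cnt_ext
  intro d
  cases d with
  | zero =>
    have h1 := cnt_succ s 0
    have h2 := cnt_succ t 0
    rw [if_neg hs] at h1; rw [if_neg ht] at h2
    rw [h1, h2, h 1 le_rfl]
  | succ n => exact h (n+1) (by omega)

lemma cnt_insert {s : Finset ℕ} {a : ℕ} (ha : a ∉ s) (d : ℕ) :
    cnt (insert a s) d = cnt s d + (if d ≤ a then 1 else 0) := by
  rw [cnt, Finset.filter_insert]
  split_ifs with h
  · rw [Finset.card_insert_of_notMem (fun hc => ha (Finset.mem_of_mem_filter _ hc))]; rfl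
  · simp [cnt]

lemma cnt_erase {s : Finset ℕ} {a : ℕ} (ha : a ∈ s) (d : ℕ) :
    cnt (s.erase a) d + (if d ≤ a then 1 else 0) = cnt s d := by
  have h := cnt_insert (Finset.notMem_erase a s) d
  rw [Finset.insert_erase ha] at h
  omega

lemma cnt_erase_zero (s : Finset ℕ) {d : ℕ} (hd : 1 ≤ d) :
    cnt (s.erase 0) d = cnt s d := by
  rw [cnt, cnt, Finset.filter_erase, Finset.erase_eq_of_notMem]
  intro h
  have := (Finset.mem_filter.mp h).2
  omega

lemma mem_skewDiag {lam nu : Finset ℕ} {i j : ℕ} :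
    (i, j) ∈ skewDiag lam nu ↔
      1 ≤ i ∧ i ≤ j ∧ cnt nu (j + 1 - i) < i ∧ i ≤ cnt lam (j + 1 - i) := by
  rw [skewDiag, Set.mem_diff, mem_shiftedDiagram, mem_shiftedDiagram]
  constructor
  · rintro ⟨⟨h1, h2, h3⟩, h4⟩
    refine ⟨h1, h2, ?_, h3⟩
    by_contra h
    exact h4 ⟨h1, h2, by omega⟩
  · rintro ⟨h1, h2, h3, h4⟩
    exact ⟨⟨h1, h2, h4⟩, fun ⟨_, _, h6⟩ => by omega⟩

def ribbonCell (lam : Finset ℕ) (d : ℕ) : ℕ × ℕ := (cnt lam d, cnt lam d + d - 1)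

def nuOf (lam : Finset ℕ) (q k : ℕ) : Finset ℕ := (insert q (lam.erase (q + k))).erase 0

lemma nuOf_strict (lam : Finset ℕ) (q k : ℕ) : IsStrictPartition (nuOf lam q k) := by
  intro x hx
  have := Finset.mem_erase.mp hx
  omega

lemma zero_not_mem_of_strict {s : Finset ℕ} (hs : IsStrictPartition s) : 0 ∉ s :=
  fun h => absurd (hs 0 h) (lt_irrefl 0)

lemma cnt_nuOf {lam : Finset ℕ} {q k : ℕ} (hq : q ∉ lam) (hqk : q + k ∈ lam)
    {d : ℕ} (hd : 1 ≤ d) :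
    cnt (nuOf lam q k) d + (if q + 1 ≤ d ∧ d ≤ q + k then 1 else 0) = cnt lam d := by
  have h0 : q ∉ lam.erase (q + k) := fun h => hq (Finset.mem_of_mem_erase h)
  have h1 := cnt_insert h0 d
  have h2 := cnt_erase hqk d
  have h3 := cnt_erase_zero (insert q (lam.erase (q + k))) hd
  rw [nuOf, h3, h1]
  split_ifs at h2 ⊢ <;> omega

lemma diag_ribbonCell (lam : Finset ℕ) {d : ℕ} (hd : 1 ≤ d) :
    diagVal (ribbonCell lam d) = d := by
  simp only [diagVal, ribbonCell]
  omega

lemma skew_nuOf {lam : Finset ℕ} {q k : ℕ} (hq : q ∉ lam) (hqk : q + k ∈ lam) :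
    skewDiag lam (nuOf lam q k) = ribbonCell lam '' Set.Icc (q + 1) (q + k) := by
  ext c
  obtain ⟨i, j⟩ := c
  rw [mem_skewDiag]
  constructor
  · rintro ⟨h1, h2, h3, h4⟩
    have hd1 : 1 ≤ j + 1 - i := by omega
    have hc := cnt_nuOf hq hqk hd1
    have hdi : q + 1 ≤ j + 1 - i ∧ j + 1 - i ≤ q + k := by
      by_contra h
      rw [if_neg h] at hc
      omega
    refine ⟨j + 1 - i, hdi, ?_⟩
    rw [if_pos hdi] at hc
    simp only [ribbonCell, Prod.mk.injEq]
    omega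
  · rintro ⟨d, hdi, hrc⟩
    simp only [Set.mem_Icc] at hdi
    have hd1 : 1 ≤ d := by omega
    have hF : 1 ≤ cnt lam d := cnt_pos_of_mem hqk hdi.2
    simp only [ribbonCell, Prod.mk.injEq] at hrc
    have hc := cnt_nuOf hq hqk hd1
    rw [if_pos (by omega : q + 1 ≤ d ∧ d ≤ q + k)] at hc
    have hji : j + 1 - i = d := by omega
    rw [hji]
    omega

lemma cellAdj_symm {x y : ℕ × ℕ} (h : CellAdj x y) : CellAdj y x := by
  unfold CellAdj at *; tauto

lemma edgeConnected_chain {φ : ℕ → ℕ × ℕ} {a b : ℕ}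
    (hadj : ∀ d, a ≤ d → d < b → CellAdj (φ d) (φ (d + 1))) :
    EdgeConnected (φ '' Set.Icc a b) := by
  set S := φ '' Set.Icc a b with hS
  set r := fun x y => CellAdj x y ∧ x ∈ S ∧ y ∈ S with hr
  have hsym : Symmetric r := by
    rintro x y ⟨h1, h2, h3⟩
    exact ⟨cellAdj_symm h1, h3, h2⟩
  have key : ∀ n d, a ≤ d → d + n ≤ b → Relation.ReflTransGen r (φ d) (φ (d + n)) := by
    intro n
    induction n with
    | zero => intro d _ _; exact .refl
    | succ n ih =>
      intro d hd hdb
      refine (ih d hd (by omega)).tail ?_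
      refine ⟨hadj (d + n) (by omega) (by omega), ?_, ?_⟩
      · exact ⟨d + n, Set.mem_Icc.mpr ⟨by omega, by omega⟩, rfl⟩
      · exact ⟨d + n + 1, Set.mem_Icc.mpr ⟨by omega, by omega⟩, rfl⟩
  intro c hc d hd
  obtain ⟨d1, hd1, rfl⟩ := hc
  obtain ⟨d2, hd2, rfl⟩ := hd
  rw [Set.mem_Icc] at hd1 hd2
  rcases le_total d1 d2 with h | h
  · have h' := key (d2 - d1) d1 hd1.1 (by omega)
    have e : d1 + (d2 - d1) = d2 := by omega
    rwa [e] at h'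
  · have h' := key (d1 - d2) d2 hd2.1 (by omega)
    have e : d2 + (d1 - d2) = d1 := by omega
    rw [e] at h'
    haveI : Std.Symm r := ⟨fun _ _ h => hsym h⟩
    exact Std.Symm.symm _ _ h'

lemma ribbonCell_injOn (lam : Finset ℕ) {a b : ℕ} (ha : 1 ≤ a) :
    Set.InjOn (ribbonCell lam) (Set.Icc a b) := by
  intro d1 h1 d2 h2 h
  rw [Set.mem_Icc] at h1 h2
  simp only [ribbonCell, Prod.mk.injEq] at h
  omega

lemma ncard_Icc_image (lam : Finset ℕ) {a b : ℕ} (ha : 1 ≤ a) (hab : a ≤ b + 1) :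
    (ribbonCell lam '' Set.Icc a b).ncard = b + 1 - a := by
  rw [Set.ncard_image_of_injOn (ribbonCell_injOn lam ha), ← Finset.coe_Icc, Set.ncard_coe_finset, Nat.card_Icc]

lemma master_ribbon {lam : Finset ℕ} {q k : ℕ} (hlam : IsStrictPartition lam)
    (hk : 1 ≤ k) (hq : q ∉ lam) (hqk : q + k ∈ lam) :
    IsRemovableSingleRibbon lam (nuOf lam q k) k ∧
    IsHead (skewDiag lam (nuOf lam q k)) (ribbonCell lam (q + k)) ∧
    (∀ c, IsHead (skewDiag lam (nuOf lam q k)) c → diagVal c = q + k) := by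
  have hskew := skew_nuOf hq hqk
  have hmemrc : ∀ d, q + 1 ≤ d → d ≤ q + k →
      ribbonCell lam d ∈ skewDiag lam (nuOf lam q k) := by
    intro d h1 h2
    rw [hskew]
    exact ⟨d, Set.mem_Icc.mpr ⟨h1, h2⟩, rfl⟩
  have hdiag : ∀ c ∈ skewDiag lam (nuOf lam q k), diagVal c ≤ q + k ∧
      ∃ d, q + 1 ≤ d ∧ d ≤ q + k ∧ c = ribbonCell lam d := by
    intro c hc
    rw [hskew] at hc
    obtain ⟨d, hd, rfl⟩ := hc
    rw [Set.mem_Icc] at hd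
    rw [diag_ribbonCell lam (by omega)]
    exact ⟨hd.2, d, hd.1, hd.2, rfl⟩
  have hhead : IsHead (skewDiag lam (nuOf lam q k)) (ribbonCell lam (q + k)) := by
    refine ⟨hmemrc (q + k) (by omega) le_rfl, ?_⟩
    intro c hc
    rw [diag_ribbonCell lam (by omega)]
    exact (hdiag c hc).1
  refine ⟨⟨hlam, nuOf_strict lam q k, ?_, ?_, ?_, ?_⟩, hhead, ?_⟩
  · -- subset
    intro c hc
    obtain ⟨i, j⟩ := c
    rw [mem_shiftedDiagram] at hc ⊢
    obtain ⟨h1, h2, h3⟩ := hc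
    refine ⟨h1, h2, le_trans h3 ?_⟩
    have := cnt_nuOf hq hqk (by omega : (1:ℕ) ≤ j + 1 - i)
    omega
  · -- ncard
    rw [hskew, ncard_Icc_image lam (by omega) (by omega)]
    omega
  · -- connected
    rw [hskew]
    apply edgeConnected_chain
    intro d hd1 hd2
    have hF1 : 1 ≤ cnt lam (d + 1) := cnt_pos_of_mem hqk (by omega)
    have h2 := cnt_anti lam (Nat.le_succ d)
    have h3 := cnt_succ lam d
    simp only [CellAdj, ribbonCell]
    split_ifs at h3 <;> omega
  · -- injOn
    intro c1 h1 c2 h2 he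
    obtain ⟨d1, ha1, hb1, rfl⟩ := (hdiag c1 h1).2
    obtain ⟨d2, ha2, hb2, rfl⟩ := (hdiag c2 h2).2
    rw [diag_ribbonCell lam (by omega), diag_ribbonCell lam (by omega)] at he
    rw [he]
  · -- all heads have diag q+k
    intro c hc
    have h1 := (hdiag c hc.1).1
    have h2 := hc.2 _ hhead.1
    rw [diag_ribbonCell lam (by omega)] at h2
    omega

lemma diag_adj_le {x y : ℕ × ℕ} (h : CellAdj x y) : diagVal y ≤ diagVal x + 1 := by
  obtain ⟨a, b⟩ := x
  obtain ⟨c, d⟩ := y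
  simp only [CellAdj, diagVal] at *
  omega

lemma diag_ivt {S : Set (ℕ × ℕ)} (hconn : EdgeConnected S) {c1 c2 : ℕ × ℕ}
    (h1 : c1 ∈ S) (h2 : c2 ∈ S) {e : ℕ} (he1 : diagVal c1 ≤ e) (he2 : e ≤ diagVal c2) :
    ∃ c ∈ S, diagVal c = e := by
  have hpath := hconn c1 h1 c2 h2
  refine Relation.ReflTransGen.head_induction_on
    (motive := fun x _ => x ∈ S → diagVal x ≤ e → ∃ c ∈ S, diagVal c = e) hpath ?_ ?_ h1 he1
  · intro hx hxe
    exact ⟨c2, h2, by omega⟩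
  · rintro x y ⟨hadj, hxS, hyS⟩ _ ih hx hxe
    rcases eq_or_lt_of_le hxe with h | h
    · exact ⟨x, hx, h⟩
    · exact ih hyS (by have := diag_adj_le hadj; omega)

lemma skew_converse {lam nu : Finset ℕ} {k : ℕ} (hk : 1 ≤ k)
    (hrib : IsRemovableSingleRibbon lam nu k) :
    ∃ q, q ∉ lam ∧ q + k ∈ lam ∧ nu = nuOf lam q k := by
  obtain ⟨hlam, hnu, hsub, hcard, hconn, hinj⟩ := hrib
  -- Step 1 : cnt nu d ≤ cnt lam d
  have hGF : ∀ d, 1 ≤ d → cnt nu d ≤ cnt lam d := by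
    intro d hd
    rcases Nat.eq_zero_or_pos (cnt nu d) with h | h
    · omega
    · have hmem : (cnt nu d, cnt nu d + d - 1) ∈ shiftedDiagram nu := by
        rw [mem_shiftedDiagram]
        refine ⟨h, by omega, ?_⟩
        have : cnt nu d + d - 1 + 1 - cnt nu d = d := by omega
        rw [this]
      have := hsub hmem
      rw [mem_shiftedDiagram] at this
      have he : cnt nu d + d - 1 + 1 - cnt nu d = d := by omega
      rw [he] at this
      exact this.2.2
  -- Step 2 : cnt lam d ≤ cnt nu d + 1
  have hFG : ∀ d, 1 ≤ d → cnt lam d ≤ cnt nu d + 1 := by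
    intro d hd
    by_contra h
    push_neg at h
    have hc1 : (cnt nu d + 1, cnt nu d + d) ∈ skewDiag lam nu := by
      rw [mem_skewDiag]
      have he : cnt nu d + d + 1 - (cnt nu d + 1) = d := by omega
      rw [he]
      omega
    have hc2 : (cnt nu d + 2, cnt nu d + d + 1) ∈ skewDiag lam nu := by
      rw [mem_skewDiag]
      have he : cnt nu d + d + 1 + 1 - (cnt nu d + 2) = d := by omega
      rw [he]
      omega
    have := hinj hc1 hc2 (by simp only [diagVal]; omega)
    simp only [Prod.mk.injEq] at this
    omega
  -- skew membership in terms of ribbonCell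
  have hskewmem : ∀ c, c ∈ skewDiag lam nu ↔
      ∃ d, 1 ≤ d ∧ cnt nu d < cnt lam d ∧ c = ribbonCell lam d := by
    intro c
    obtain ⟨i, j⟩ := c
    rw [mem_skewDiag]
    constructor
    · rintro ⟨h1, h2, h3, h4⟩
      refine ⟨j + 1 - i, by omega, by omega, ?_⟩
      have := hFG (j + 1 - i) (by omega)
      have := hGF (j + 1 - i) (by omega)
      simp only [ribbonCell, Prod.mk.injEq]
      omega
    · rintro ⟨d, hd1, hd2, he⟩
      simp only [ribbonCell, Prod.mk.injEq] at he
      have := hGF d hd1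
      have hji : j + 1 - i = d := by omega
      rw [hji]
      omega
  -- the set of active diagonals as a Finset
  set N := lam.sup id with hN
  have hbound : ∀ d, cnt nu d < cnt lam d → d ≤ N := by
    intro d hd
    have h1 : 1 ≤ cnt lam d := by omega
    obtain ⟨x, hx⟩ := Finset.card_pos.mp h1
    rw [Finset.mem_filter] at hx
    exact le_trans hx.2 (Finset.le_sup (f := id) hx.1)
  set Df := (Finset.Icc 1 N).filter (fun d => cnt nu d < cnt lam d) with hDf
  have hDmem : ∀ d, d ∈ Df ↔ 1 ≤ d ∧ cnt nu d < cnt lam d := by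
    intro d
    rw [hDf, Finset.mem_filter, Finset.mem_Icc]
    constructor
    · rintro ⟨⟨h1, _⟩, h2⟩; exact ⟨h1, h2⟩
    · rintro ⟨h1, h2⟩; exact ⟨⟨h1, hbound d h2⟩, h2⟩
  -- skew = ribbonCell '' Df
  have hskew : skewDiag lam nu = ribbonCell lam '' ↑Df := by
    ext c
    rw [hskewmem c]
    constructor
    · rintro ⟨d, h1, h2, rfl⟩
      exact ⟨d, by rw [Finset.mem_coe, hDmem]; exact ⟨h1, h2⟩, rfl⟩
    · rintro ⟨d, hd, rfl⟩
      rw [Finset.mem_coe, hDmem] at hd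
      exact ⟨d, hd.1, hd.2, rfl⟩
  -- card of Df is k
  have hinjD : Set.InjOn (ribbonCell lam) ↑Df := by
    intro d1 h1 d2 h2 h
    rw [Finset.mem_coe, hDmem] at h1 h2
    simp only [ribbonCell, Prod.mk.injEq] at h
    omega
  have hcardD : Df.card = k := by
    rw [← hcard, hskew, Set.ncard_image_of_injOn hinjD, Set.ncard_coe_finset]
  -- interval property
  have hival : ∀ d1 ∈ Df, ∀ d2 ∈ Df, ∀ e, d1 ≤ e → e ≤ d2 → e ∈ Df := by
    intro d1 h1 d2 h2 e he1 he2
    have hd1 := (hDmem d1).mp h1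
    have hd2 := (hDmem d2).mp h2
    have hm1 : ribbonCell lam d1 ∈ skewDiag lam nu := by
      rw [hskewmem]; exact ⟨d1, hd1.1, hd1.2, rfl⟩
    have hm2 : ribbonCell lam d2 ∈ skewDiag lam nu := by
      rw [hskewmem]; exact ⟨d2, hd2.1, hd2.2, rfl⟩
    obtain ⟨c, hc, hce⟩ := diag_ivt (e := e) hconn hm1 hm2
      (by rw [diag_ribbonCell lam hd1.1]; exact he1)
      (by rw [diag_ribbonCell lam hd2.1]; exact he2)
    rw [hskewmem] at hc
    obtain ⟨d, hda, hdb, rfl⟩ := hc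
    rw [diag_ribbonCell lam hda] at hce
    rw [hDmem, ← hce]
    exact ⟨hda, hdb⟩
  -- Df is an Icc
  have hne : Df.Nonempty := by
    rw [← Finset.card_pos, hcardD]; omega
  set a := Df.min' hne with ha
  set b := Df.max' hne with hb
  have haD : a ∈ Df := Df.min'_mem hne
  have hbD : b ∈ Df := Df.max'_mem hne
  have ha1 : 1 ≤ a := ((hDmem a).mp haD).1
  have hDIcc : Df = Finset.Icc a b := by
    apply Finset.ext
    intro d
    rw [Finset.mem_Icc]
    constructor
    · intro hd; exact ⟨Df.min'_le d hd, Df.le_max' d hd⟩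
    · rintro ⟨h1, h2⟩; exact hival a haD b hbD d h1 h2
  have hbak : b + 1 = a + k := by
    have := hcardD
    rw [hDIcc, Nat.card_Icc] at this
    have hab : a ≤ b := Df.min'_le b hbD
    omega
  -- q := a - 1
  have hqlam : a - 1 ∉ lam := by
    rcases Nat.eq_zero_or_pos (a - 1) with h0 | h0
    · rw [h0]; exact zero_not_mem_of_strict hlam
    · intro hmem
      have hq1 : a - 1 ∉ Df := by
        intro h
        have := Df.min'_le _ h
        omega
      rw [hDmem] at hq1
      push_neg at hq1
      have hFq : cnt lam (a - 1) ≤ cnt nu (a - 1) := hq1 h0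
      have hGq := hGF (a - 1) h0
      have haDf := (hDmem a).mp haD
      have hsucc := cnt_succ nu (a - 1)
      have hanti := cnt_anti lam (by omega : a - 1 ≤ a)
      have hFa := hFG a ha1
      have hsl := cnt_succ lam (a - 1)
      rw [if_pos hmem] at hsl
      have he : a - 1 + 1 = a := by omega
      rw [he] at hsucc hsl
      split_ifs at hsucc <;> omega
  have hqk : a - 1 + k ∈ lam := by
    have he : a - 1 + k = b := by omega
    rw [he]
    have hbDf := (hDmem b).mp hbD
    have hb1 : b + 1 ∉ Df := by
      intro h
      have := Df.le_max' _ h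
      omega
    rw [hDmem] at hb1
    push_neg at hb1
    have hFb1 : cnt lam (b + 1) ≤ cnt nu (b + 1) := hb1 (by omega)
    have hGb1 := hGF (b + 1) (by omega)
    have hanti := cnt_anti nu (by omega : b ≤ b + 1)
    have hFb := hFG b hbDf.1
    have hsl := cnt_succ lam b
    split_ifs at hsl with h
    · exact h
    · omega
  refine ⟨a - 1, hqlam, hqk, ?_⟩
  have hmemiff : ∀ d, 1 ≤ d → ((a ≤ d ∧ d ≤ b) ↔ cnt nu d < cnt lam d) := by
    intro d hd
    constructor
    · intro h
      have : d ∈ Df := by rw [hDIcc, Finset.mem_Icc]; exact h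
      exact ((hDmem d).mp this).2
    · intro h
      have : d ∈ Df := (hDmem d).mpr ⟨hd, h⟩
      rw [hDIcc, Finset.mem_Icc] at this
      exact this
  apply cnt_ext' (zero_not_mem_of_strict hnu)
    (zero_not_mem_of_strict (nuOf_strict lam (a - 1) k))
  intro d hd
  have hc := cnt_nuOf hqlam hqk hd
  have h1 := hGF d hd
  have h2 := hFG d hd
  have h3 := hmemiff d hd
  split_ifs at hc with h
  · have := h3.mp ⟨by omega, by omega⟩
    omega
  · have hnot : ¬ (cnt nu d < cnt lam d) := by
      intro hx
      have hab := h3.mpr hx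
      exact h ⟨by omega, by omega⟩
    omega

lemma nuOf_pos {lam : Finset ℕ} (hlam : IsStrictPartition lam) {q : ℕ} (k : ℕ)
    (hq1 : 1 ≤ q) : nuOf lam q k = insert q (lam.erase (q + k)) := by
  rw [nuOf]
  apply Finset.erase_eq_of_notMem
  rw [Finset.mem_insert]
  rintro (h | h)
  · omega
  · exact absurd (hlam 0 (Finset.mem_of_mem_erase h)) (lt_irrefl 0)

lemma nuOf_zero {lam : Finset ℕ} (hlam : IsStrictPartition lam) (k : ℕ) :
    nuOf lam 0 k = lam.erase k := by
  rw [nuOf, zero_add, Finset.erase_insert]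
  exact fun h => absurd (hlam 0 (Finset.mem_of_mem_erase h)) (lt_irrefl 0)

theorem stmt1 (k : ℕ) (hk : 1 ≤ k) (lam nu : Finset ℕ)
    (hlam : IsStrictPartition lam) (hnu : IsStrictPartition nu)
    (hsub : shiftedDiagram nu ⊆ shiftedDiagram lam) :
    (IsRemovableSingleRibbon lam nu k ↔
      ((∃ p ∈ lam, k < p ∧ p - k ∉ lam ∧ nu = insert (p - k) (lam.erase p)) ∨
       (k ∈ lam ∧ nu = lam.erase k))) ∧
    (∀ p ∈ lam, k < p → p - k ∉ lam → nu = insert (p - k) (lam.erase p) →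
       ∀ c, IsHead (skewDiag lam nu) c → diagVal c = p) ∧
    ((k ∈ lam ∧ nu = lam.erase k) →
       ∀ c, IsHead (skewDiag lam nu) c → diagVal c = k) ∧
    (∀ m : ℕ,
      ((∃ nu' : Finset ℕ, IsRemovableSingleRibbon lam nu' k ∧
          ∃ c, IsHead (skewDiag lam nu') c ∧ diagVal c = m + k) ↔
        (m + k ∈ lam ∧ m ∉ lam)) ∧
      (∀ nu₁ nu₂ : Finset ℕ,
        IsRemovableSingleRibbon lam nu₁ k →
        (∃ c, IsHead (skewDiag lam nu₁) c ∧ diagVal c = m + k) →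
        IsRemovableSingleRibbon lam nu₂ k →
        (∃ c, IsHead (skewDiag lam nu₂) c ∧ diagVal c = m + k) →
        nu₁ = nu₂)) := by
  refine ⟨?_, ?_, ?_, ?_⟩
  · constructor
    · intro h
      obtain ⟨q, hq, hqk, rfl⟩ := skew_converse hk h
      rcases Nat.eq_zero_or_pos q with rfl | hq1
      · right
        rw [zero_add] at hqk
        exact ⟨hqk, nuOf_zero hlam k⟩
      · left
        refine ⟨q + k, hqk, by omega, ?_, ?_⟩
        · rw [Nat.add_sub_cancel]; exact hq
        · rw [Nat.add_sub_cancel, nuOf_pos hlam k hq1]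
    · rintro (⟨p, hp, hkp, hpk, rfl⟩ | ⟨hkl, rfl⟩)
      · have he : p - k + k = p := by omega
        have h := (master_ribbon hlam hk (q := p - k) hpk (by rw [he]; exact hp)).1
        rwa [nuOf_pos hlam k (by omega), he] at h
      · have h := (master_ribbon hlam hk (q := 0) (zero_not_mem_of_strict hlam)
          (by rw [zero_add]; exact hkl)).1
        rwa [nuOf_zero hlam k] at h
  · intro p hp hkp hpk hnueq c hc
    have he : p - k + k = p := by omega
    have h := (master_ribbon hlam hk (q := p - k) hpk (by rw [he]; exact hp)).2.2
    have hnu' : nu = nuOf lam (p - k) k := by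
      rw [hnueq, nuOf_pos hlam k (by omega), he]
    rw [hnu'] at hc
    rw [h c hc, he]
  · rintro ⟨hkl, hnueq⟩ c hc
    have h := (master_ribbon hlam hk (q := 0) (zero_not_mem_of_strict hlam)
      (by rw [zero_add]; exact hkl)).2.2
    have hnu' : nu = nuOf lam 0 k := by rw [hnueq, nuOf_zero hlam k]
    rw [hnu'] at hc
    rw [h c hc, zero_add]
  · intro m
    constructor
    · constructor
      · rintro ⟨nu', hrib, c, hhead, hdiag⟩
        obtain ⟨q, hq, hqk, rfl⟩ := skew_converse hk hrib
        have h := (master_ribbon hlam hk hq hqk).2.2 c hhead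
        have hqm : q = m := by omega
        subst hqm
        exact ⟨hqk, hq⟩
      · rintro ⟨h1, h2⟩
        obtain ⟨hrib, hhead, _⟩ := master_ribbon hlam hk h2 h1
        exact ⟨nuOf lam m k, hrib, ribbonCell lam (m + k), hhead,
          diag_ribbonCell lam (by omega)⟩
    · rintro nu1 nu2 hr1 ⟨c1, hh1, hd1⟩ hr2 ⟨c2, hh2, hd2⟩
      obtain ⟨q1, hq1, hqk1, rfl⟩ := skew_converse hk hr1
      obtain ⟨q2, hq2, hqk2, rfl⟩ := skew_converse hk hr2
      have e1 := (master_ribbon hlam hk hq1 hqk1).2.2 c1 hh1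
      have e2 := (master_ribbon hlam hk hq2 hqk2).2.2 c2 hh2
      have : q1 = q2 := by omega
      rw [this]
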